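/- If θ₁ ≤ θ₂ ≤ θ₃ are real numbers and the quadratic form q(c₁,c₂,c₃) = θ₁c₁² + θ₂c₂² + θ₃c₃² is negative on at most a one-dimensional subspace of the plane {c₁+c₂+c₃ = 0} (i.e., there is no two-dimensional subspace of this plane on which q is negative definite), then θ₃ ≥ 0. -/
import Mathlib
set_option maxHeartbeats 1000000 in

/-- If θ₁ ≤ θ₂ ≤ θ₃ and the quadratic form q(c) = θ₁c₁² + θ₂c₂² + θ₃c₃² is negative
on at most a one-dimensional subspace of the plane {c₁+c₂+c₃ = 0} (every subspace
contained in that plane on which q is negative on nonzero vectors has dimension ≤ 1),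
then θ₃ ≥ 0. -/
theorem stmt_12 (θ₁ θ₂ θ₃ : ℝ) (h12 : θ₁ ≤ θ₂) (h23 : θ₂ ≤ θ₃)
    (hindex : ∀ W : Submodule ℝ (Fin 3 → ℝ),
      (∀ w ∈ W, w 0 + w 1 + w 2 = 0) →
      (∀ w ∈ W, w ≠ 0 → θ₁ * (w 0) ^ 2 + θ₂ * (w 1) ^ 2 + θ₃ * (w 2) ^ 2 < 0) →
      Module.finrank ℝ W ≤ 1) :
    0 ≤ θ₃ := by
  by_contra h
  push_neg at h
  set f : (Fin 3 → ℝ) →ₗ[ℝ] ℝ :=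
    { toFun := fun w => w 0 + w 1 + w 2
      map_add' := fun a b => by simp [Pi.add_apply]; ring
      map_smul' := fun c a => by simp [Pi.smul_apply]; ring } with hf
  have hsurj : Function.Surjective f := by
    intro x
    exact ⟨![x, 0, 0], by simp [hf]⟩
  have hrank : Module.finrank ℝ (LinearMap.ker f) = 2 := by
    have h1 := LinearMap.finrank_range_add_finrank_ker f
    have h2 : Module.finrank ℝ (LinearMap.range f) = 1 := by
      rw [LinearMap.range_eq_top.mpr hsurj]
      simp
    have h3 : Module.finrank ℝ (Fin 3 → ℝ) = 3 := by simp
    omega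
  have := hindex (LinearMap.ker f)
    (fun w hw => by simpa [hf] using hw)
    (fun w hw hw0 => by
      have h1 : θ₁ * w 0 ^ 2 ≤ θ₃ * w 0 ^ 2 :=
        mul_le_mul_of_nonneg_right (h12.trans h23) (sq_nonneg _)
      have h2 : θ₂ * w 1 ^ 2 ≤ θ₃ * w 1 ^ 2 :=
        mul_le_mul_of_nonneg_right h23 (sq_nonneg _)
      have hpos : 0 < w 0 ^ 2 + w 1 ^ 2 + w 2 ^ 2 := by
        rcases lt_or_eq_of_le (by positivity : (0:ℝ) ≤ w 0 ^ 2 + w 1 ^ 2 + w 2 ^ 2) with hp | hp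
        · exact hp
        · exfalso
          apply hw0
          have e0 : w 0 = 0 := by
            have : w 0 ^ 2 = 0 := by nlinarith [sq_nonneg (w 1), sq_nonneg (w 2)]
            exact pow_eq_zero_iff (by norm_num) |>.mp this
          have e1 : w 1 = 0 := by
            have : w 1 ^ 2 = 0 := by nlinarith [sq_nonneg (w 0), sq_nonneg (w 2)]
            exact pow_eq_zero_iff (by norm_num) |>.mp this
          have e2 : w 2 = 0 := by
            have : w 2 ^ 2 = 0 := by nlinarith [sq_nonneg (w 0), sq_nonneg (w 1)]
            exact pow_eq_zero_iff (by norm_num) |>.mp this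
          funext i
          fin_cases i
          · exact e0
          · exact e1
          · exact e2
      nlinarith)
  omega
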